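/- Let A₁, A₂, B₁, B₂ be Hermitian operators with square equal to the identity on finite-dimensional Hilbert spaces H_A, H_B, and ρ a state on H_A ⊗ H_B. Then tr(ρ𝓑) ≤ √(4 + |tr(ρ·([A₁,A₂]⊗[B₁,B₂]))|), where 𝓑 is the CHSH operator. -/

import Mathlib

open Matrix Kronecker ComplexOrder

lemma psd_trace_re_nonneg {α : Type*} [Fintype α] [DecidableEq α]
    {M : Matrix α α ℂ} (hM : M.PosSemidef) : 0 ≤ M.trace.re := by
  have hdiag : ∀ i, (0:ℂ) ≤ M i i := by
    intro i
    exact hM.diag_nonneg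
  have h : (0:ℂ) ≤ M.trace := Finset.sum_nonneg (fun i _ => hdiag i)
  exact (Complex.le_def.mp h).1

lemma trace_mul_conj_nonneg {α : Type*} [Fintype α] [DecidableEq α]
    {ρ : Matrix α α ℂ} (hρ : ρ.PosSemidef) (M : Matrix α α ℂ) :
    0 ≤ ((ρ * (Mᴴ * M)).trace).re := by
  have h1 : (ρ * (Mᴴ * M)).trace = (M * ρ * Mᴴ).trace := by
    rw [← Matrix.mul_assoc, Matrix.trace_mul_cycle]
  rw [h1]
  exact psd_trace_re_nonneg (hρ.mul_mul_conjTranspose_same M)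

lemma variance_aux {α : Type*} [Fintype α] [DecidableEq α]
    {ρ X : Matrix α α ℂ} (hρ : ρ.PosSemidef) (hρtr : ρ.trace = 1)
    (hX : X.IsHermitian) :
    ((ρ * X).trace).re ^ 2 ≤ ((ρ * (X * X)).trace).re := by
  set t : ℝ := ((ρ * X).trace).re with ht
  set Y : Matrix α α ℂ := X - (t:ℂ) • 1 with hY
  have hYH : Yᴴ = Y := by
    simp [hY, conjTranspose_sub, conjTranspose_smul, hX.eq, Complex.star_def,
      Complex.conj_ofReal]
  have h0 : 0 ≤ ((ρ * (Yᴴ * Y)).trace).re := trace_mul_conj_nonneg hρ Y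
  rw [hYH] at h0
  have hYY : Y * Y = X * X - ((2*t : ℝ):ℂ) • X + (((t*t : ℝ)):ℂ) • 1 := by
    simp only [hY, Matrix.sub_mul, Matrix.mul_sub, Matrix.smul_mul, Matrix.mul_smul,
      Matrix.mul_one, Matrix.one_mul, smul_smul]
    push_cast
    module
  rw [hYY] at h0
  have hexp : (ρ * (X * X - ((2*t : ℝ):ℂ) • X + (((t*t : ℝ)):ℂ) • 1)).trace
      = (ρ * (X*X)).trace - ((2*t : ℝ):ℂ) * (ρ * X).trace + (((t*t : ℝ)):ℂ) := by
    simp [Matrix.mul_sub, Matrix.mul_add, Matrix.mul_smul, Matrix.mul_one,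
      trace_sub, trace_add, trace_smul, hρtr, smul_eq_mul]
  rw [hexp] at h0
  simp only [Complex.add_re, Complex.sub_re, Complex.mul_re, Complex.ofReal_re,
    Complex.ofReal_im] at h0
  nlinarith [h0]

lemma kron_sub_right {l m n p : Type*} (A : Matrix l m ℂ) (B C : Matrix n p ℂ) :
    A ⊗ₖ (B - C) = A ⊗ₖ B - A ⊗ₖ C := by
  ext ⟨i, j⟩ ⟨k, l'⟩
  simp [Matrix.kroneckerMap_apply, mul_sub]

lemma kron_sub_left {l m n p : Type*} (A B : Matrix l m ℂ) (C : Matrix n p ℂ) :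
    (A - B) ⊗ₖ C = A ⊗ₖ C - B ⊗ₖ C := by
  ext ⟨i, j⟩ ⟨k, l'⟩
  simp [Matrix.kroneckerMap_apply, sub_mul]

lemma kron_herm {m n : ℕ} {A : Matrix (Fin m) (Fin m) ℂ} {B : Matrix (Fin n) (Fin n) ℂ}
    (hA : A.IsHermitian) (hB : B.IsHermitian) : (A ⊗ₖ B).IsHermitian := by
  ext ⟨i, j⟩ ⟨k, l⟩
  simp [Matrix.conjTranspose_apply, Matrix.kroneckerMap_apply, star_mul',
    hA.apply, hB.apply]

/-- Tsirelson's relation: ⟨𝓑⟩ ≤ √(4 + |⟨[A₁,A₂]⊗[B₁,B₂]⟩|). -/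
theorem chsh_commutator_bound {m n : ℕ}
    (A₁ A₂ : Matrix (Fin m) (Fin m) ℂ) (B₁ B₂ : Matrix (Fin n) (Fin n) ℂ)
    (hA₁ : A₁.IsHermitian) (hA₂ : A₂.IsHermitian)
    (hB₁ : B₁.IsHermitian) (hB₂ : B₂.IsHermitian)
    (hA₁u : A₁ * A₁ = 1) (hA₂u : A₂ * A₂ = 1)
    (hB₁u : B₁ * B₁ = 1) (hB₂u : B₂ * B₂ = 1)
    (ρ : Matrix (Fin m × Fin n) (Fin m × Fin n) ℂ)
    (hρ : ρ.PosSemidef) (hρtr : ρ.trace = 1) :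
    ((ρ * (A₁ ⊗ₖ (B₁ + B₂) + A₂ ⊗ₖ (B₁ - B₂))).trace).re ≤
      Real.sqrt (4 +
        ‖(ρ * ((A₁ * A₂ - A₂ * A₁) ⊗ₖ (B₁ * B₂ - B₂ * B₁))).trace‖) := by
  set 𝓑 : Matrix (Fin m × Fin n) (Fin m × Fin n) ℂ :=
    A₁ ⊗ₖ (B₁ + B₂) + A₂ ⊗ₖ (B₁ - B₂) with hBdef
  set C : Matrix (Fin m × Fin n) (Fin m × Fin n) ℂ :=
    (A₁ * A₂ - A₂ * A₁) ⊗ₖ (B₁ * B₂ - B₂ * B₁) with hCdef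
  -- 𝓑 is Hermitian
  have h𝓑 : 𝓑.IsHermitian :=
    (kron_herm hA₁ (hB₁.add hB₂)).add (kron_herm hA₂ (hB₁.sub hB₂))
  -- the square identity 𝓑² = 4 - [A₁,A₂]⊗[B₁,B₂]
  have key : 𝓑 * 𝓑 = (4:ℂ) • 1 - C := by
    have e1 : (B₁+B₂)*(B₁+B₂) = (1+1) + (B₁*B₂ + B₂*B₁) := by
      rw [Matrix.add_mul, Matrix.mul_add, Matrix.mul_add, hB₁u, hB₂u]; abel
    have e2 : (B₁-B₂)*(B₁-B₂) = (1+1) - (B₁*B₂ + B₂*B₁) := by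
      rw [Matrix.sub_mul, Matrix.mul_sub, Matrix.mul_sub, hB₁u, hB₂u]; abel
    have e3 : (B₁+B₂)*(B₁-B₂) = B₂*B₁ - B₁*B₂ := by
      rw [Matrix.add_mul, Matrix.mul_sub, Matrix.mul_sub, hB₁u, hB₂u]; abel
    have e4 : (B₁-B₂)*(B₁+B₂) = B₁*B₂ - B₂*B₁ := by
      rw [Matrix.sub_mul, Matrix.mul_add, Matrix.mul_add, hB₁u, hB₂u]; abel
    have h4 : (4:ℂ) • (1 : Matrix (Fin m × Fin n) (Fin m × Fin n) ℂ) = 1 + 1 + 1 + 1 := by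
      rw [show (4:ℂ) = 1+1+1+1 by norm_num, add_smul, add_smul, add_smul, one_smul]
    rw [hBdef, hCdef, Matrix.add_mul, Matrix.mul_add, Matrix.mul_add,
      ← Matrix.mul_kronecker_mul, ← Matrix.mul_kronecker_mul, ← Matrix.mul_kronecker_mul,
      ← Matrix.mul_kronecker_mul, hA₁u, hA₂u, e1, e2, e3, e4, h4]
    simp only [Matrix.kronecker_add, kron_sub_right, Matrix.add_kronecker, kron_sub_left,
      Matrix.one_kronecker_one]
    abel
  -- variance bound
  have hvar : ((ρ * 𝓑).trace).re ^ 2 ≤ ((ρ * (𝓑 * 𝓑)).trace).re :=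
    variance_aux hρ hρtr h𝓑
  -- compute tr(ρ𝓑²)
  have hsq : (ρ * (𝓑 * 𝓑)).trace = 4 - (ρ * C).trace := by
    rw [key, Matrix.mul_sub, Matrix.mul_smul, Matrix.mul_one, trace_sub, trace_smul,
      hρtr, smul_eq_mul, mul_one]
  have hbound : ((ρ * (𝓑 * 𝓑)).trace).re ≤ 4 + ‖(ρ * C).trace‖ := by
    rw [hsq]
    have h1 : ((4 : ℂ) - (ρ * C).trace).re = 4 - ((ρ * C).trace).re := by simp
    rw [h1]
    have h2 : -((ρ * C).trace).re ≤ ‖(ρ * C).trace‖ := by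
      have := Complex.abs_re_le_norm ((ρ * C).trace)
      have := abs_le.mp (by simpa using this)
      linarith [this.1]
    linarith
  -- conclude
  set t : ℝ := ((ρ * 𝓑).trace).re with htdef
  have habs : 0 ≤ 4 + ‖(ρ * C).trace‖ := by positivity
  rcases le_or_gt t 0 with ht | ht
  · exact le_trans ht (Real.sqrt_nonneg _)
  · have h3 : t ^ 2 ≤ 4 + ‖(ρ * C).trace‖ := le_trans hvar hbound
    calc t = Real.sqrt (t ^ 2) := by rw [Real.sqrt_sq ht.le]
      _ ≤ Real.sqrt (4 + ‖(ρ * C).trace‖) := Real.sqrt_le_sqrt h3
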